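/- arXiv:1307.4691 — 5 statements merged into one kernel-verified Lean document; each statement's English description precedes it below -/
import Mathlib

section
/- For all integers $q \ge 2$ and $q' \ge 2$, $\sum_{r=1}^{q \wedge q'} ((r-1)!)^2 \binom{q-1}{r-1}^2 \binom{q'-1}{r-1}^2 (q+q'-2r)! \le (q-1)!\,(q'-1)!\,3^{q+q'-2}$. -/
open Finset

private lemma three_pow_eq' (n : ℕ) :
    3 ^ n = ∑ i ∈ Finset.range (n + 1), Nat.choose n i * 2 ^ (n - i) := by
  have h := add_pow (1 : ℕ) 2 n
  simp only [one_pow, one_mul] at h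
  norm_num at h
  rw [h]
  apply Finset.sum_congr rfl
  intro i _
  ring

private lemma choose_le_two_pow' (N k : ℕ) : Nat.choose N k ≤ 2 ^ N := by
  rcases le_or_gt k N with h | h
  · calc Nat.choose N k ≤ ∑ i ∈ Finset.range (N + 1), Nat.choose N i :=
        Finset.single_le_sum (fun i _ => Nat.zero_le _) (Finset.mem_range.mpr (by omega))
      _ = 2 ^ N := Nat.sum_range_choose N
  · simp [Nat.choose_eq_zero_of_lt h]

private lemma pointwise' (m n i : ℕ) (him : i ≤ m) (hin : i ≤ n) :
    (i.factorial) ^ 2 * (Nat.choose m i) ^ 2 * (Nat.choose n i) ^ 2 *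
        (m + n - 2 * i).factorial
      ≤ m.factorial * n.factorial *
        ((Nat.choose m i * 2 ^ (m - i)) * (Nat.choose n i * 2 ^ (n - i))) := by
  have hab : m + n - 2 * i = (m - i) + (n - i) := by omega
  rw [hab]
  have h1 : Nat.choose m i * i.factorial * (m - i).factorial = m.factorial :=
    Nat.choose_mul_factorial_mul_factorial him
  have h2 : Nat.choose n i * i.factorial * (n - i).factorial = n.factorial :=
    Nat.choose_mul_factorial_mul_factorial hin
  have h3 := Nat.choose_mul_factorial_mul_factorial (Nat.le_add_right (m - i) (n - i))
  rw [Nat.add_sub_cancel_left] at h3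
  have key : (i.factorial) ^ 2 * (Nat.choose m i) ^ 2 * (Nat.choose n i) ^ 2 *
      ((m - i) + (n - i)).factorial
      = m.factorial * n.factorial *
        (Nat.choose m i * Nat.choose n i * Nat.choose ((m - i) + (n - i)) (m - i)) := by
    rw [← h3, ← h1, ← h2]; ring
  rw [key]
  have hc : Nat.choose ((m - i) + (n - i)) (m - i) ≤ 2 ^ (m - i) * 2 ^ (n - i) := by
    rw [← pow_add]; exact choose_le_two_pow' _ _
  calc m.factorial * n.factorial *
        (Nat.choose m i * Nat.choose n i * Nat.choose ((m - i) + (n - i)) (m - i))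
      ≤ m.factorial * n.factorial *
        (Nat.choose m i * Nat.choose n i * (2 ^ (m - i) * 2 ^ (n - i))) := by
        exact Nat.mul_le_mul_left _ (Nat.mul_le_mul_left _ hc)
    _ = _ := by ring

private lemma sumbound' (M N : ℕ) :
    ∑ i ∈ Finset.range (min M N + 1),
        (Nat.choose M i * 2 ^ (M - i)) * (Nat.choose N i * 2 ^ (N - i))
      ≤ 3 ^ M * 3 ^ N := by
  calc ∑ i ∈ Finset.range (min M N + 1),
        (Nat.choose M i * 2 ^ (M - i)) * (Nat.choose N i * 2 ^ (N - i))
      ≤ ∑ i ∈ Finset.range (min M N + 1), (Nat.choose M i * 2 ^ (M - i)) * 3 ^ N := by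
        apply Finset.sum_le_sum
        intro i hi
        apply Nat.mul_le_mul_left
        rw [three_pow_eq']
        refine Finset.single_le_sum (f := fun j => Nat.choose N j * 2 ^ (N - j))
          (fun j _ => Nat.zero_le _) (Finset.mem_range.mpr ?_)
        simp only [Finset.mem_range] at hi
        omega
    _ = (∑ i ∈ Finset.range (min M N + 1), Nat.choose M i * 2 ^ (M - i)) * 3 ^ N := by
        rw [Finset.sum_mul]
    _ ≤ 3 ^ M * 3 ^ N := by
        apply Nat.mul_le_mul_right
        rw [three_pow_eq' M]
        apply Finset.sum_le_sum_of_subset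
        exact Finset.range_subset_range.mpr (by omega)

/-- For all integers `q, q' ≥ 2`,
`∑_{r=1}^{q ∧ q'} ((r-1)!)² C(q-1,r-1)² C(q'-1,r-1)² (q+q'-2r)! ≤ (q-1)! (q'-1)! 3^{q+q'-2}`. -/
theorem stmt_2 (q q' : ℕ) (hq : 2 ≤ q) (hq' : 2 ≤ q') :
    ∑ r ∈ Finset.Icc 1 (min q q'),
        ((r - 1).factorial) ^ 2 * (Nat.choose (q - 1) (r - 1)) ^ 2 *
          (Nat.choose (q' - 1) (r - 1)) ^ 2 * (q + q' - 2 * r).factorial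
      ≤ (q - 1).factorial * (q' - 1).factorial * 3 ^ (q + q' - 2) := by
  have hK : min q q' = (min (q - 1) (q' - 1)) + 1 := by omega
  rw [hK, ← Finset.Ico_add_one_right_eq_Icc, Finset.sum_Ico_eq_sum_range]
  simp only [Nat.add_sub_cancel, Nat.add_sub_cancel_left, Nat.succ_sub_one]
  set M := q - 1 with hM
  set N := q' - 1 with hN
  calc ∑ i ∈ Finset.range (min M N + 1),
        (i.factorial) ^ 2 * (Nat.choose M i) ^ 2 * (Nat.choose N i) ^ 2 *
          (q + q' - 2 * (1 + i)).factorial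
      ≤ ∑ i ∈ Finset.range (min M N + 1),
        M.factorial * N.factorial *
          ((Nat.choose M i * 2 ^ (M - i)) * (Nat.choose N i * 2 ^ (N - i))) := by
        apply Finset.sum_le_sum
        intro i hi
        simp only [Finset.mem_range] at hi
        have him : i ≤ M := by omega
        have hin : i ≤ N := by omega
        have hq2 : q + q' - 2 * (1 + i) = M + N - 2 * i := by omega
        rw [hq2]
        exact pointwise' M N i him hin
    _ = M.factorial * N.factorial *
        ∑ i ∈ Finset.range (min M N + 1),
          (Nat.choose M i * 2 ^ (M - i)) * (Nat.choose N i * 2 ^ (N - i)) := by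
        rw [← Finset.mul_sum]
    _ ≤ M.factorial * N.factorial * (3 ^ M * 3 ^ N) :=
        Nat.mul_le_mul_left _ (sumbound' M N)
    _ = M.factorial * N.factorial * 3 ^ (q + q' - 2) := by
        have h : M + N = q + q' - 2 := by omega
        rw [← pow_add, h]
end

section
/- For every integer $q \ge 2$, $\sum_{r=1}^{q-1} ((r-1)!)^2 \binom{q-1}{r-1}^4 (2q-2r)! \le ((q-1)!)^2\, 3^{2q-2}$. -/
open Finset

lemma choose_le_two_pow'_s3 (n k : ℕ) : n.choose k ≤ 2 ^ n := by
  rcases le_or_gt k n with h | h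
  · calc n.choose k ≤ ∑ m ∈ range (n+1), n.choose m :=
        Finset.single_le_sum (fun i _ => Nat.zero_le _) (mem_range.2 (by omega))
      _ = 2 ^ n := Nat.sum_range_choose n
  · simp [Nat.choose_eq_zero_of_lt h]

lemma term_bound (N i : ℕ) (hi : i ≤ N) :
    (i.factorial) ^ 2 * (N.choose i) ^ 4 * (2 * (N - i)).factorial
      ≤ (N.factorial) ^ 2 * (N.choose i * 2 ^ (N - i)) ^ 2 := by
  set m := N - i with hm
  have h1 : (2 * m).factorial = (2 * m).choose m * (m.factorial * m.factorial) := by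
    have := Nat.choose_mul_factorial_mul_factorial (show m ≤ 2 * m by omega)
    have h2 : 2 * m - m = m := by omega
    rw [h2] at this
    rw [← this]; ring
  have h2 : (2 * m).choose m ≤ 2 ^ (2 * m) := choose_le_two_pow'_s3 _ _
  have h3 : i.factorial * m.factorial * N.choose i = N.factorial := by
    have := Nat.choose_mul_factorial_mul_factorial hi
    rw [← hm] at this; linarith [this]
  calc (i.factorial) ^ 2 * (N.choose i) ^ 4 * (2 * m).factorial
      = (i.factorial * m.factorial * N.choose i) ^ 2 * (N.choose i) ^ 2 * (2*m).choose m := by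
        rw [h1]; ring
    _ ≤ (i.factorial * m.factorial * N.choose i) ^ 2 * (N.choose i) ^ 2 * 2 ^ (2 * m) :=
        Nat.mul_le_mul_left _ h2
    _ = (N.factorial) ^ 2 * (N.choose i * 2 ^ m) ^ 2 := by
        rw [h3]; rw [show 2 ^ (2 * m) = (2 ^ m) ^ 2 by rw [← pow_mul]; ring_nf]; ring

lemma sum_sq_le_sq_sum (s : Finset ℕ) (f : ℕ → ℕ) :
    ∑ i ∈ s, (f i) ^ 2 ≤ (∑ i ∈ s, f i) ^ 2 := by
  rw [sq]
  calc ∑ i ∈ s, (f i) ^ 2 ≤ ∑ i ∈ s, f i * (∑ j ∈ s, f j) := by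
        refine Finset.sum_le_sum fun i hi => ?_
        rw [sq]
        exact Nat.mul_le_mul_left _ (Finset.single_le_sum (fun j _ => Nat.zero_le _) hi)
    _ = (∑ i ∈ s, f i) * (∑ j ∈ s, f j) := by rw [← Finset.sum_mul]

/-- For every integer `q ≥ 2`,
`∑_{r=1}^{q-1} ((r-1)!)² C(q-1,r-1)⁴ (2q-2r)! ≤ ((q-1)!)² 3^{2q-2}`. -/
theorem stmt_3 (q : ℕ) (hq : 2 ≤ q) :
    ∑ r ∈ Finset.Icc 1 (q - 1),
        ((r - 1).factorial) ^ 2 * (Nat.choose (q - 1) (r - 1)) ^ 4 * (2 * q - 2 * r).factorial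
      ≤ ((q - 1).factorial) ^ 2 * 3 ^ (2 * q - 2) := by
  set N := q - 1 with hN
  have hN1 : 1 ≤ N := by omega
  rw [← Finset.Ico_add_one_right_eq_Icc, Finset.sum_Ico_eq_sum_range]
  have key : ∀ i ∈ range (N + 1 - 1),
      ((1 + i - 1).factorial) ^ 2 * (N.choose (1 + i - 1)) ^ 4 * (2 * q - 2 * (1 + i)).factorial
        ≤ (N.factorial) ^ 2 * (N.choose i * 2 ^ (N - i)) ^ 2 := by
    intro i hi
    rw [mem_range] at hi
    have h1 : 1 + i - 1 = i := by omega
    have h2 : 2 * q - 2 * (1 + i) = 2 * (N - i) := by omega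
    rw [h1, h2]
    exact term_bound N i (by omega)
  calc _ ≤ ∑ i ∈ range (N + 1 - 1), (N.factorial) ^ 2 * (N.choose i * 2 ^ (N - i)) ^ 2 :=
        Finset.sum_le_sum key
    _ = (N.factorial) ^ 2 * ∑ i ∈ range N, (N.choose i * 2 ^ (N - i)) ^ 2 := by
        rw [← Finset.mul_sum]; norm_num
    _ ≤ (N.factorial) ^ 2 * (∑ i ∈ range N, N.choose i * 2 ^ (N - i)) ^ 2 :=
        Nat.mul_le_mul_left _ (sum_sq_le_sq_sum _ _)
    _ ≤ (N.factorial) ^ 2 * (3 ^ N) ^ 2 := by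
        refine Nat.mul_le_mul_left _ (Nat.pow_le_pow_left ?_ 2)
        have h3 : (3 : ℕ) ^ N = ∑ i ∈ range (N + 1), 1 ^ i * 2 ^ (N - i) * N.choose i := by
          rw [show (3 : ℕ) = 1 + 2 from rfl, add_pow]
          norm_num
        calc ∑ i ∈ range N, N.choose i * 2 ^ (N - i)
            ≤ ∑ i ∈ range (N + 1), N.choose i * 2 ^ (N - i) :=
              Finset.sum_le_sum_of_subset (Finset.range_subset_range.2 (by omega))
          _ = ∑ i ∈ range (N + 1), 1 ^ i * 2 ^ (N - i) * N.choose i :=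
              Finset.sum_congr rfl fun i _ => by ring
          _ = 3 ^ N := h3.symm
    _ = (N.factorial) ^ 2 * 3 ^ (2 * q - 2) := by
        rw [show 2 * q - 2 = N * 2 by omega, pow_mul]
end

section
/- For the Bessel function $J_0$ of the first kind of order zero, $|J_0(x)| \le x^{-1/2}$ for all $x > 0$. -/
open scoped Nat

/-- The Bessel function of the first kind of order zero. -/
noncomputable def besselJ0 (x : ℝ) : ℝ :=
  ∑' k : ℕ, (-1) ^ k * x ^ (2 * k) / (2 ^ (2 * k) * (k.factorial : ℝ) ^ 2)

namespace BesselAux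

/-- term of J0 -/
noncomputable def T0 (k : ℕ) (x : ℝ) : ℝ :=
  (-1) ^ k * x ^ (2 * k) / (2 ^ (2 * k) * (k.factorial : ℝ) ^ 2)

/-- term of J0' -/
noncomputable def T1 (k : ℕ) (x : ℝ) : ℝ :=
  (-1) ^ k * ((2 * k : ℕ) : ℝ) * x ^ (2 * k - 1) / (2 ^ (2 * k) * (k.factorial : ℝ) ^ 2)

/-- term of J0'' -/
noncomputable def T2 (k : ℕ) (x : ℝ) : ℝ :=
  (-1) ^ k * ((2 * k : ℕ) : ℝ) * ((2 * k - 1 : ℕ) : ℝ) * x ^ (2 * k - 2) /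
    (2 ^ (2 * k) * (k.factorial : ℝ) ^ 2)

/-- derivative of J0 -/
noncomputable def D1 (x : ℝ) : ℝ := ∑' k : ℕ, T1 k x

/-- second derivative of J0 -/
noncomputable def D2 (x : ℝ) : ℝ := ∑' k : ℕ, T2 k x

lemma besselJ0_eq (x : ℝ) : besselJ0 x = ∑' k : ℕ, T0 k x := rfl

lemma denom_pos (k : ℕ) : (0:ℝ) < 2 ^ (2 * k) * (k.factorial : ℝ) ^ 2 := by
  positivity

lemma fact_le_denom (k : ℕ) : (k.factorial : ℝ) ≤ 2 ^ (2 * k) * (k.factorial : ℝ) ^ 2 := by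
  have h1 : (1:ℝ) ≤ 2 ^ (2 * k) := one_le_pow₀ (by norm_num)
  have h2 : (1:ℝ) ≤ (k.factorial : ℝ) := by exact_mod_cast Nat.one_le_iff_ne_zero.mpr k.factorial_ne_zero
  nlinarith [h1, h2]

lemma two_mul_le_pow (k : ℕ) : 2 * k ≤ 2 ^ k := by
  induction k with
  | zero => norm_num
  | succ n ih =>
    rcases Nat.eq_zero_or_pos n with h | h
    · subst h; norm_num
    · have : 2 ≤ 2 ^ n := by calc 2 = 2*1 := by norm_num
                                  _ ≤ 2^n := by omega
      calc 2 * (n+1) = 2*n + 2 := by ring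
        _ ≤ 2^n + 2^n := by omega
        _ = 2^(n+1) := by ring

lemma sq_le_pow (k : ℕ) : 2 * k * (2 * k - 1) ≤ 4 ^ k := by
  have h := two_mul_le_pow k
  calc 2 * k * (2 * k - 1) ≤ (2*k) * (2*k) := Nat.mul_le_mul_left _ (by omega)
    _ ≤ 2^k * 2^k := Nat.mul_le_mul h h
    _ = 4^k := by rw [← Nat.mul_pow]

lemma abs_T0_le (k : ℕ) {x M : ℝ} (hM : 1 ≤ M) (hx : |x| ≤ M) :
    |T0 k x| ≤ (M ^ 2) ^ k / k.factorial := by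
  have hMpos : (0:ℝ) < M := lt_of_lt_of_le one_pos hM
  rw [T0, abs_div, abs_mul, abs_pow, abs_pow, abs_neg, abs_one, one_pow, one_mul,
    abs_of_pos (denom_pos k)]
  apply div_le_div₀ (by positivity) ?_ (Nat.cast_pos.mpr k.factorial_pos) (fact_le_denom k)
  calc |x| ^ (2*k) ≤ M ^ (2*k) := pow_le_pow_left₀ (abs_nonneg x) hx _
    _ = (M^2)^k := by rw [← pow_mul]

lemma abs_T1_le (k : ℕ) {x M : ℝ} (hM : 1 ≤ M) (hx : |x| ≤ M) :
    |T1 k x| ≤ ((2 * M ^ 2) ^ k) / k.factorial := by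
  have hMpos : (0:ℝ) < M := lt_of_lt_of_le one_pos hM
  have hx' : |x| ^ (2*k-1) ≤ M ^ (2*k) := by
    calc |x| ^ (2*k-1) ≤ M ^ (2*k-1) := pow_le_pow_left₀ (abs_nonneg x) hx _
      _ ≤ M ^ (2*k) := pow_le_pow_right₀ hM (by omega)
  rw [T1, abs_div, abs_mul, abs_mul, abs_pow, abs_pow, abs_neg, abs_one, one_pow, one_mul,
    abs_of_pos (denom_pos k)]
  apply div_le_div₀ (by positivity) ?_ (Nat.cast_pos.mpr k.factorial_pos) (fact_le_denom k)
  have h2k : |((2*k : ℕ):ℝ)| ≤ (2:ℝ)^k := by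
    rw [abs_of_nonneg (by positivity)]
    exact_mod_cast two_mul_le_pow k
  calc |((2*k : ℕ):ℝ)| * |x| ^ (2*k-1) ≤ 2^k * M^(2*k) := by
        apply mul_le_mul h2k hx' (by positivity) (by positivity)
    _ = (2*M^2)^k := by rw [mul_pow, ← pow_mul]

lemma abs_T2_le (k : ℕ) {x M : ℝ} (hM : 1 ≤ M) (hx : |x| ≤ M) :
    |T2 k x| ≤ ((4 * M ^ 2) ^ k) / k.factorial := by
  have hMpos : (0:ℝ) < M := lt_of_lt_of_le one_pos hM
  have hx' : |x| ^ (2*k-2) ≤ M ^ (2*k) := by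
    calc |x| ^ (2*k-2) ≤ M ^ (2*k-2) := pow_le_pow_left₀ (abs_nonneg x) hx _
      _ ≤ M ^ (2*k) := pow_le_pow_right₀ hM (by omega)
  rw [T2, abs_div, abs_mul, abs_mul, abs_mul, abs_pow, abs_pow, abs_neg, abs_one, one_pow,
    one_mul, abs_of_pos (denom_pos k)]
  apply div_le_div₀ (by positivity) ?_ (Nat.cast_pos.mpr k.factorial_pos) (fact_le_denom k)
  have h2k : |((2*k : ℕ):ℝ)| * |((2*k-1 : ℕ):ℝ)| ≤ (4:ℝ)^k := by
    rw [abs_of_nonneg (by positivity), abs_of_nonneg (by positivity)]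
    exact_mod_cast sq_le_pow k
  calc |((2*k : ℕ):ℝ)| * |((2*k-1 : ℕ):ℝ)| * |x| ^ (2*k-2) ≤ 4^k * M^(2*k) := by
        apply mul_le_mul h2k hx' (by positivity) (by positivity)
    _ = (4*M^2)^k := by rw [mul_pow, ← pow_mul]

lemma summable_aux (C : ℝ) : Summable (fun k : ℕ => C ^ k / k.factorial) :=
  Real.summable_pow_div_factorial C

lemma summable_T0 (x : ℝ) : Summable (fun k => T0 k x) := by
  apply Summable.of_norm_bounded (summable_aux ((max 1 |x|)^2))
  intro k
  exact abs_T0_le k (le_max_left _ _) (le_max_right _ _)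

lemma summable_T1 (x : ℝ) : Summable (fun k => T1 k x) := by
  apply Summable.of_norm_bounded (summable_aux (2*(max 1 |x|)^2))
  intro k
  exact abs_T1_le k (le_max_left _ _) (le_max_right _ _)

lemma summable_T2 (x : ℝ) : Summable (fun k => T2 k x) := by
  apply Summable.of_norm_bounded (summable_aux (4*(max 1 |x|)^2))
  intro k
  exact abs_T2_le k (le_max_left _ _) (le_max_right _ _)


lemma T0_def (k : ℕ) (x : ℝ) : T0 k x =
  (-1) ^ k * x ^ (2 * k) / (2 ^ (2 * k) * (k.factorial : ℝ) ^ 2) := rfl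

lemma T1_def (k : ℕ) (x : ℝ) : T1 k x =
  (-1) ^ k * ((2 * k : ℕ) : ℝ) * x ^ (2 * k - 1) / (2 ^ (2 * k) * (k.factorial : ℝ) ^ 2) := rfl

lemma D1_eq (x : ℝ) : D1 x = ∑' k : ℕ, T1 k x := rfl


lemma hasDerivAt_T0 (k : ℕ) (x : ℝ) : HasDerivAt (fun y => T0 k y) (T1 k x) x := by
  have h := (hasDerivAt_pow (2*k) x).const_mul ((-1:ℝ)^k / (2^(2*k)*(k.factorial:ℝ)^2))
  convert h using 1
  · rfl
  · rfl
  · funext y; rw [T0]; ring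
  · rw [T1]; push_cast; ring

lemma hasDerivAt_T1 (k : ℕ) (x : ℝ) : HasDerivAt (fun y => T1 k y) (T2 k x) x := by
  have h := (hasDerivAt_pow (2*k-1) x).const_mul
    ((-1:ℝ)^k * ((2*k : ℕ):ℝ) / (2^(2*k)*(k.factorial:ℝ)^2))
  have e : 2*k-1-1 = 2*k-2 := by omega
  rw [e] at h
  convert h using 1
  · rfl
  · rfl
  · funext y; rw [T1]; ring
  · rw [T2]; ring

lemma hasDerivAt_besselJ0 (x : ℝ) : HasDerivAt besselJ0 (D1 x) x := by
  have hb : x ∈ Metric.ball (0:ℝ) (|x|+1) := by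
    simp [Real.dist_eq]
  have h := hasDerivAt_tsum_of_isPreconnected
    (summable_aux (2*(max 1 (|x|+1))^2)) Metric.isOpen_ball
    (convex_ball (0:ℝ) (|x|+1)).isPreconnected
    (fun k y _ => hasDerivAt_T0 k y)
    (fun k y hy => by
      have hy' : |y| ≤ max 1 (|x|+1) := by
        simp [Real.dist_eq] at hy
        exact le_max_of_le_right hy.le
      exact abs_T1_le k (le_max_left _ _) hy')
    hb (summable_T0 x) hb
  exact h

lemma hasDerivAt_D1 (x : ℝ) : HasDerivAt D1 (D2 x) x := by
  have hb : x ∈ Metric.ball (0:ℝ) (|x|+1) := by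
    simp [Real.dist_eq]
  have h := hasDerivAt_tsum_of_isPreconnected
    (summable_aux (4*(max 1 (|x|+1))^2)) Metric.isOpen_ball
    (convex_ball (0:ℝ) (|x|+1)).isPreconnected
    (fun k y _ => hasDerivAt_T1 k y)
    (fun k y hy => by
      have hy' : |y| ≤ max 1 (|x|+1) := by
        simp [Real.dist_eq] at hy
        exact le_max_of_le_right hy.le
      exact abs_T2_le k (le_max_left _ _) hy')
    hb (summable_T1 x) hb
  exact h



lemma ode (x : ℝ) : x * D2 x + D1 x + x * besselJ0 x = 0 := by
  have hs2 : Summable (fun k => x * T2 k x) := (summable_T2 x).mul_left x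
  have hsum : Summable (fun k => x * T2 k x + T1 k x) := hs2.add (summable_T1 x)
  have h1 : x * D2 x + D1 x = ∑' k, (x * T2 k x + T1 k x) := by
    rw [D2, D1, ← tsum_mul_left, ← Summable.tsum_add hs2 (summable_T1 x)]
  have key : ∀ k : ℕ, x * T2 (k+1) x + T1 (k+1) x = -(x * T0 k x) := by
    intro k
    have e1 : 2*(k+1)-1 = 2*k+1 := by omega
    have e2 : 2*(k+1)-2 = 2*k := by omega
    rw [T0, T1, T2, e1, e2]
    have e3 : 2*(k+1) = 2*k+2 := by omega
    rw [e3, Nat.factorial_succ]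
    have hden : ((2:ℝ)^(2*k) * (k.factorial:ℝ)^2) ≠ 0 := by positivity
    have hk1 : ((k:ℝ)+1) ≠ 0 := by positivity
    push_cast
    field_simp
    ring
  have h0 : x * T2 0 x + T1 0 x = 0 := by simp [T1, T2]
  rw [h1, Summable.tsum_eq_zero_add hsum, h0, zero_add]
  have : ∑' k : ℕ, (x * T2 (k+1) x + T1 (k+1) x) = ∑' k : ℕ, -(x * T0 k x) := tsum_congr key
  rw [this, tsum_neg, tsum_mul_left, besselJ0_eq]
  ring


lemma besselJ0_zero : besselJ0 0 = 1 := by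
  rw [besselJ0_eq]
  rw [tsum_eq_single 0 (fun k hk => by
    rw [T0_def, zero_pow (by omega : 2*k ≠ 0)]; simp)]
  rw [T0_def]; norm_num

lemma D1_zero : D1 0 = 0 := by
  rw [D1_eq]
  rw [tsum_eq_single 0 (fun k hk => by
    rw [T1_def, zero_pow (by omega : 2*k-1 ≠ 0)]; simp)]
  rw [T1_def]; norm_num

/-- energy for small x -/
noncomputable def G (y : ℝ) : ℝ := besselJ0 y ^ 2 + D1 y ^ 2

lemma hasDerivAt_G (y : ℝ) :
    HasDerivAt G (2 * besselJ0 y * D1 y + 2 * D1 y * D2 y) y := by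
  have hf := hasDerivAt_besselJ0 y
  have hD := hasDerivAt_D1 y
  have h := ((hf.mul hf).add (hD.mul hD))
  convert h using 1
  · rfl
  · rfl
  · funext z; rw [G]; simp only [Pi.add_apply, Pi.mul_apply]; ring
  · ring

lemma G_le_one {x : ℝ} (hx : 0 ≤ x) : besselJ0 x ^ 2 + D1 x ^ 2 ≤ 1 := by
  have hanti : AntitoneOn G (Set.Ici 0) := by
    apply antitoneOn_of_deriv_nonpos (convex_Ici 0)
    · exact fun y _ => ((hasDerivAt_G y).continuousAt).continuousWithinAt
    · intro y _
      exact ((hasDerivAt_G y).differentiableAt).differentiableWithinAt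
    · intro y hy
      rw [interior_Ici] at hy
      rw [(hasDerivAt_G y).deriv]
      have hode := ode y
      have hy0 : y ≠ 0 := ne_of_gt hy
      have hD2 : D2 y = (-(D1 y) - y * besselJ0 y)/y := by
        field_simp
        linarith [hode]
      have heq : 2 * besselJ0 y * D1 y + 2 * D1 y * ((-(D1 y) - y * besselJ0 y)/y)
          = -2*(D1 y)^2/y := by field_simp; ring
      rw [hD2, heq]
      have h2 : -2*(D1 y)^2 ≤ 0 := by nlinarith [sq_nonneg (D1 y)]
      exact div_nonpos_iff.mpr (Or.inr ⟨h2, hy.le⟩)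
  have h1 : G x ≤ G 0 := hanti Set.self_mem_Ici hx hx
  have : G 0 = 1 := by rw [G, besselJ0_zero, D1_zero]; norm_num
  rw [G] at h1; linarith [h1, this]


/-- energy for large x -/
noncomputable def En (y : ℝ) : ℝ :=
  y * (besselJ0 y ^ 2 + D1 y ^ 2) + besselJ0 y * D1 y + besselJ0 y ^ 2 / (2 * y)

lemma hasDerivAt_En {y : ℝ} (hy : 0 < y) :
    HasDerivAt En (-(besselJ0 y)^2/(2*y^2)) y := by
  have hf := hasDerivAt_besselJ0 y
  have hD := hasDerivAt_D1 y
  have h1 := (hasDerivAt_id y).mul ((hf.mul hf).add (hD.mul hD))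
  have h2 := hf.mul hD
  have h3 := (hf.mul hf).div ((hasDerivAt_id y).const_mul (2:ℝ)) (by positivity)
  have h := (h1.add h2).add h3
  have hy0 : y ≠ 0 := ne_of_gt hy
  have hD2 : D2 y = (-(D1 y) - y * besselJ0 y)/y := by
    field_simp
    linarith [ode y]
  convert h using 1
  · rfl
  · rfl
  · funext z; simp only [En, id_eq, Pi.add_apply, Pi.mul_apply, Pi.div_apply]; ring
  · rw [hD2]
    simp only [id_eq, Pi.add_apply, Pi.mul_apply]
    field_simp
    ring

lemma En_le {x : ℝ} (hx : 1 ≤ x) : En x ≤ En 1 := by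
  have hanti : AntitoneOn En (Set.Ici 1) := by
    apply antitoneOn_of_deriv_nonpos (convex_Ici 1)
    · exact fun y hy => ((hasDerivAt_En (lt_of_lt_of_le one_pos hy)).continuousAt).continuousWithinAt
    · intro y hy
      rw [interior_Ici] at hy
      exact ((hasDerivAt_En (lt_trans one_pos hy)).differentiableAt).differentiableWithinAt
    · intro y hy
      rw [interior_Ici] at hy
      have hy0 : 0 < y := lt_trans one_pos hy
      rw [(hasDerivAt_En hy0).deriv]
      have : (0:ℝ) < 2*y^2 := by positivity
      exact div_nonpos_iff.mpr (Or.inr ⟨by nlinarith [sq_nonneg (besselJ0 y)], this.le⟩)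
  exact hanti Set.self_mem_Ici hx hx

lemma xfsq_le_En {x : ℝ} (hx : 0 < x) : x * besselJ0 x ^ 2 ≤ En x := by
  have key : En x - x * besselJ0 x ^ 2
      = (x * D1 x + besselJ0 x / 2)^2 / x + besselJ0 x ^ 2 / (4*x) := by
    rw [En]; field_simp; ring
  nlinarith [div_nonneg (sq_nonneg (x * D1 x + besselJ0 x / 2)) hx.le,
    div_nonneg (sq_nonneg (besselJ0 x)) (by positivity : (0:ℝ) ≤ 4*x)]


lemma fact4_ge (k : ℕ) : 24 * 5 ^ k ≤ (k + 4).factorial := by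
  induction k with
  | zero => simp [Nat.factorial]
  | succ n ih =>
    have : (n + 5).factorial = (n + 5) * (n + 4).factorial := rfl
    rw [this]
    calc 24 * 5 ^ (n+1) = 5 * (24 * 5 ^ n) := by ring
      _ ≤ 5 * (n + 4).factorial := by omega
      _ ≤ (n + 5) * (n + 4).factorial := Nat.mul_le_mul_right _ (by omega)

lemma cast_fact4_ge (k : ℕ) : (24:ℝ) * 5 ^ k ≤ ((k + 4).factorial : ℝ) := by
  exact_mod_cast fact4_ge k

lemma le8 (k : ℕ) : (2 * (k + 4) : ℕ) ≤ 8 * 2 ^ k := by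
  induction k with
  | zero => norm_num
  | succ n ih =>
    have : 8 * 2 ^ (n+1) = 8 * 2^n + 8*2^n := by ring
    have h2 : 1 ≤ 2^n := Nat.one_le_two_pow
    omega

lemma denom_ge (k : ℕ) : (147456:ℝ) * 100 ^ k ≤ 2 ^ (2 * (k + 4)) * (((k + 4).factorial : ℝ)) ^ 2 := by
  have h1 : (2:ℝ) ^ (2 * (k + 4)) = 256 * 4 ^ k := by
    rw [show 2 * (k+4) = 2*k + 8 by ring, pow_add, pow_mul]
    norm_num
    ring
  have h2 : ((24:ℝ) * 5 ^ k) ^ 2 ≤ (((k + 4).factorial : ℝ)) ^ 2 :=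
    pow_le_pow_left₀ (by positivity) (cast_fact4_ge k) 2
  rw [h1]
  calc (147456:ℝ) * 100 ^ k = 256 * 4 ^ k * ((24 * 5 ^ k)^2) := by
        rw [mul_pow, ← pow_mul]
        rw [show (100:ℝ)^k = 4^k * 25^k by rw [← mul_pow]; norm_num,
            show (5:ℝ)^(k*2) = 25^k by rw [mul_comm, pow_mul]; norm_num]
        ring
    _ ≤ 256 * 4 ^ k * (((k + 4).factorial : ℝ)) ^ 2 := by
        apply mul_le_mul_of_nonneg_left h2 (by positivity)

lemma abs_besselJ0_one : |besselJ0 1 - 1763/2304| ≤ 1/100000 := by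
  have hsum := summable_T0 1
  have hsplit := Summable.sum_add_tsum_nat_add 4 hsum
  have hhead : ∑ i ∈ Finset.range 4, T0 i 1 = 1763/2304 := by
    rw [Finset.sum_range_succ, Finset.sum_range_succ, Finset.sum_range_succ,
      Finset.sum_range_succ, Finset.sum_range_zero, T0_def, T0_def, T0_def, T0_def]
    norm_num [Nat.factorial]
  have htail_le : ∀ k : ℕ, |T0 (k+4) 1| ≤ (1/147456) * (1/100)^k := by
    intro k
    have dpos : (0:ℝ) < 2 ^ (2 * (k+4)) * (((k+4).factorial : ℝ)) ^ 2 := by positivity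
    rw [T0_def, one_pow, mul_one, abs_div, abs_of_pos dpos, abs_pow, abs_neg, abs_one, one_pow]
    have h1 : (1:ℝ)/147456 * (1/100)^k = 1 / (147456 * 100 ^ k) := by
      rw [one_div_pow]; field_simp
    rw [h1]
    exact one_div_le_one_div_of_le (by positivity) (denom_ge k)
  have hgeom : Summable (fun k : ℕ => (1/147456 : ℝ) * (1/100)^k) :=
    (summable_geometric_of_lt_one (by norm_num) (by norm_num)).mul_left _
  have hnorm : Summable (fun k => |T0 (k+4) 1|) :=
    Summable.of_nonneg_of_le (fun _ => abs_nonneg _) htail_le hgeom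
  have habs : |∑' k : ℕ, T0 (k+4) 1| ≤ (1/147456 : ℝ) * (1 - 1/100)⁻¹ := by
    calc |∑' k : ℕ, T0 (k+4) 1| ≤ ∑' k : ℕ, |T0 (k+4) 1| := by
          have h := norm_tsum_le_tsum_norm (f := fun k => T0 (k+4) 1)
            (by simpa [Real.norm_eq_abs] using hnorm)
          simpa [Real.norm_eq_abs] using h
      _ ≤ ∑' k : ℕ, (1/147456 : ℝ) * (1/100)^k := Summable.tsum_le_tsum htail_le hnorm hgeom
      _ = (1/147456 : ℝ) * (1 - 1/100)⁻¹ := by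
          rw [tsum_mul_left, tsum_geometric_of_lt_one (by norm_num) (by norm_num)]
  have : besselJ0 1 = 1763/2304 + ∑' k : ℕ, T0 (k+4) 1 := by
    rw [besselJ0_eq, ← hsplit, hhead]
  rw [this]
  rw [add_sub_cancel_left]
  calc |∑' k : ℕ, T0 (k+4) 1| ≤ (1/147456 : ℝ) * (1 - 1/100)⁻¹ := habs
    _ ≤ 1/100000 := by norm_num

lemma abs_D1_one : |D1 1 + 169/384| ≤ 1/10000 := by
  have hsum := summable_T1 1
  have hsplit := Summable.sum_add_tsum_nat_add 4 hsum
  have hhead : ∑ i ∈ Finset.range 4, T1 i 1 = -169/384 := by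
    rw [Finset.sum_range_succ, Finset.sum_range_succ, Finset.sum_range_succ,
      Finset.sum_range_succ, Finset.sum_range_zero, T1_def, T1_def, T1_def, T1_def]
    norm_num [Nat.factorial]
  have htail_le : ∀ k : ℕ, |T1 (k+4) 1| ≤ (1/18432) * (1/50)^k := by
    intro k
    have dpos : (0:ℝ) < 2 ^ (2 * (k+4)) * (((k+4).factorial : ℝ)) ^ 2 := by positivity
    rw [T1_def, one_pow, mul_one, abs_div, abs_of_pos dpos, abs_mul, abs_pow, abs_neg, abs_one,
      one_pow, one_mul, abs_of_nonneg (by positivity : (0:ℝ) ≤ ((2 * (k+4) : ℕ) : ℝ))]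
    have hnum : ((2 * (k+4) : ℕ) : ℝ) ≤ 8 * 2^k := by exact_mod_cast le8 k
    have h1 : (1:ℝ)/18432 * (1/50)^k = (8 * 2^k) / (147456 * 100 ^ k) := by
      rw [one_div_pow, show (100:ℝ)^k = 2^k * 50^k by rw [← mul_pow]; norm_num]
      field_simp
      ring
    rw [h1]
    exact div_le_div₀ (by positivity) hnum (by positivity) (denom_ge k)
  have hgeom : Summable (fun k : ℕ => (1/18432 : ℝ) * (1/50)^k) :=
    (summable_geometric_of_lt_one (by norm_num) (by norm_num)).mul_left _
  have hnorm : Summable (fun k => |T1 (k+4) 1|) :=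
    Summable.of_nonneg_of_le (fun _ => abs_nonneg _) htail_le hgeom
  have habs : |∑' k : ℕ, T1 (k+4) 1| ≤ (1/18432 : ℝ) * (1 - 1/50)⁻¹ := by
    calc |∑' k : ℕ, T1 (k+4) 1| ≤ ∑' k : ℕ, |T1 (k+4) 1| := by
          have h := norm_tsum_le_tsum_norm (f := fun k => T1 (k+4) 1)
            (by simpa [Real.norm_eq_abs] using hnorm)
          simpa [Real.norm_eq_abs] using h
      _ ≤ ∑' k : ℕ, (1/18432 : ℝ) * (1/50)^k := Summable.tsum_le_tsum htail_le hnorm hgeom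
      _ = (1/18432 : ℝ) * (1 - 1/50)⁻¹ := by
          rw [tsum_mul_left, tsum_geometric_of_lt_one (by norm_num) (by norm_num)]
  have : D1 1 = -169/384 + ∑' k : ℕ, T1 (k+4) 1 := by
    rw [D1_eq, ← hsplit, hhead]
  rw [this]
  have h2 : -169/384 + ∑' k : ℕ, T1 (k+4) 1 + 169/384 = ∑' k : ℕ, T1 (k+4) 1 := by ring
  rw [h2]
  calc |∑' k : ℕ, T1 (k+4) 1| ≤ (1/18432 : ℝ) * (1 - 1/50)⁻¹ := habs
    _ ≤ 1/10000 := by norm_num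

lemma besselJ0_one_bounds : 0.76 ≤ besselJ0 1 ∧ besselJ0 1 ≤ 0.77 := by
  have h := abs_le.mp abs_besselJ0_one
  constructor <;> [linarith [h.1]; linarith [h.2]]

lemma D1_one_bounds : -0.45 ≤ D1 1 ∧ D1 1 ≤ -0.43 := by
  have h := abs_le.mp abs_D1_one
  constructor <;> [linarith [h.1]; linarith [h.2]]


end BesselAux

/-- `|J₀(x)| ≤ x^{-1/2}` for all `x > 0`. -/
theorem stmt_8 (x : ℝ) (hx : 0 < x) : |besselJ0 x| ≤ (Real.sqrt x)⁻¹ := by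
  open BesselAux in
  have hspos : 0 < Real.sqrt x := Real.sqrt_pos.mpr hx
  rcases le_or_gt x 1 with hx1 | hx1
  · have hg := BesselAux.G_le_one hx.le
    have hf2 : besselJ0 x ^ 2 ≤ 1 := by nlinarith [sq_nonneg (BesselAux.D1 x)]
    have habs : |besselJ0 x| ≤ 1 := by
      rw [← Real.sqrt_one, ← Real.sqrt_sq_eq_abs]
      exact Real.sqrt_le_sqrt hf2
    have hs1 : Real.sqrt x ≤ 1 := by
      rw [← Real.sqrt_one]
      exact Real.sqrt_le_sqrt hx1
    calc |besselJ0 x| ≤ 1 := habs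
      _ ≤ (Real.sqrt x)⁻¹ := (one_le_inv₀ hspos).mpr hs1
  · have hE := BesselAux.En_le hx1.le
    have h1 := BesselAux.xfsq_le_En hx
    have ha := BesselAux.besselJ0_one_bounds
    have hb := BesselAux.D1_one_bounds
    have hEn1 : BesselAux.En 1 ≤ 1 := by
      have he : BesselAux.En 1 = (besselJ0 1 ^ 2 + BesselAux.D1 1 ^ 2)
          + besselJ0 1 * BesselAux.D1 1 + besselJ0 1 ^ 2 / 2 := by
        rw [BesselAux.En]; norm_num
      rw [he]
      nlinarith [ha.1, ha.2, hb.1, hb.2]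
    have hxf : x * besselJ0 x ^ 2 ≤ 1 := le_trans h1 (le_trans hE hEn1)
    have hf2 : besselJ0 x ^ 2 ≤ 1 / x := by
      rw [le_div_iff₀ hx]
      nlinarith [hxf]
    rw [← Real.sqrt_sq_eq_abs,
      show (Real.sqrt x)⁻¹ = Real.sqrt (1/x) by rw [one_div, Real.sqrt_inv]]
    exact Real.sqrt_le_sqrt hf2
end

section
/- Fix real numbers $x_1, x_2, x_3 > 0$ satisfying the strict triangle inequalities. Define for integers $\ell$ (with $\lfloor \ell x_1 \rfloor + \lfloor \ell x_2 \rfloor + \lfloor \ell x_3 \rfloor$ even) $g_{\ell} = \left(\begin{smallmatrix} \lfloor \ell x_1 \rfloor & \lfloor \ell x_2 \rfloor & \lfloor \ell x_3 \rfloor \\ 0 & 0 & 0 \end{smallmatrix}\right)^2$, where the squared Wigner 3j symbol with zero magnetic indices of even total degree $\lambda_0 = a+b+c$ equals $\frac{((\lambda_0/2)!)^2}{((\lambda_1/2)!(\lambda_2/2)!(\lambda_3/2)!)^2}\cdot\frac{\lambda_1!\lambda_2!\lambda_3!}{(\lambda_0+1)!}$ with $\lambda_1 = -a+b+c$, $\lambda_2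 = a-b+c$, $\lambda_3 = a+b-c$. Then $\lim_{\ell \to \infty} \ell^2 g_{\ell} = \frac{2}{\pi}\cdot\frac{1}{\sqrt{(x_1+x_2-x_3)(x_1-x_2+x_3)(-x_1+x_2+x_3)(x_1+x_2+x_3)}}$, the limit taken along $\ell$ for which the parity condition holds. -/
open Filter Real

open Topology

noncomputable def Sf (n : ℕ) : ℝ := Real.sqrt (2 * n * Real.pi) * (n / Real.exp 1) ^ n

lemma Sf_pos {n : ℕ} (hn : 1 ≤ n) : 0 < Sf n := by
  have : (0:ℝ) < n := by exact_mod_cast hn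
  unfold Sf; positivity

lemma tendsto_fact_div_Sf :
    Tendsto (fun n : ℕ => (n.factorial : ℝ) / Sf n) atTop (nhds 1) := by
  have h := Stirling.factorial_isEquivalent_stirling
  have hz : ∀ᶠ n : ℕ in atTop, Sf n ≠ 0 := by
    filter_upwards [eventually_ge_atTop 1] with n hn
    exact (Sf_pos hn).ne'
  exact (Asymptotics.isEquivalent_iff_tendsto_one hz).mp h

/-- key multiplicative identity for `Sf (2n)` -/
lemma Sf_two_mul (n : ℕ) : Sf (2 * n) * Real.sqrt (Real.pi * n) = Sf n ^ 2 * 4 ^ n := by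
  unfold Sf
  have hc : ((2 * n : ℕ) : ℝ) = 2 * (n : ℝ) := by push_cast; ring
  rw [hc]
  have h1 : Real.sqrt (2 * (2 * (n:ℝ)) * Real.pi) = 2 * Real.sqrt (Real.pi * n) := by
    rw [show (2 * (2 * (n:ℝ)) * Real.pi) = 4 * (Real.pi * n) by ring, show (4:ℝ) = 2^2 by norm_num,
      Real.sqrt_mul (by positivity), Real.sqrt_sq (by norm_num)]
  have h2 : ((2 * (n:ℝ)) / Real.exp 1) ^ (2 * n) = 4 ^ n * ((n / Real.exp 1) ^ n) ^ 2 := by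
    rw [show ((2 * (n:ℝ)) / Real.exp 1) = 2 * (n / Real.exp 1) by ring, mul_pow, pow_mul,
      ← pow_mul ((n:ℝ)/Real.exp 1), mul_comm 2 n, pow_mul]
    norm_num
  rw [h1, h2]
  have h3 : Real.sqrt (Real.pi * n) * Real.sqrt (Real.pi * n) = Real.pi * n := Real.mul_self_sqrt (by positivity)
  have h4 : Real.sqrt (2 * n * Real.pi) * Real.sqrt (2 * n * Real.pi) = 2 * n * Real.pi := Real.mul_self_sqrt (by positivity)
  linear_combination (4 ^ n * (((n:ℝ) / Real.exp 1) ^ n) ^ 2) * (2 * h3 - h4)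

noncomputable def St (n : ℕ) : ℝ := (n.factorial : ℝ) / Sf n

lemma key_identity (p q r s : ℕ) (hp : 1 ≤ p) (hq : 1 ≤ q) (hr : 1 ≤ r)
    (hs : s = p + q + r) :
    ((s.factorial : ℝ) ^ 2 / ((p.factorial : ℝ) * q.factorial * r.factorial) ^ 2) *
        (((2 * p).factorial : ℝ) * ((2 * q).factorial : ℝ) * ((2 * r).factorial : ℝ)) /
        ((2 * s + 1).factorial : ℝ)
      = (St s ^ 2 * St (2 * p) * St (2 * q) * St (2 * r)) /
          (St p ^ 2 * St q ^ 2 * St r ^ 2 * St (2 * s)) *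
        (Real.sqrt s /
          (Real.pi * (Real.sqrt p * Real.sqrt q * Real.sqrt r) * (2 * s + 1))) := by
  have hs1 : 1 ≤ s := by omega
  have hpR : (0:ℝ) < p := by exact_mod_cast hp
  have hqR : (0:ℝ) < q := by exact_mod_cast hq
  have hrR : (0:ℝ) < r := by exact_mod_cast hr
  have hsR : (0:ℝ) < s := by exact_mod_cast hs1
  have sqp : (0:ℝ) < Real.sqrt p := Real.sqrt_pos.mpr hpR
  have sqq : (0:ℝ) < Real.sqrt q := Real.sqrt_pos.mpr hqR
  have sqr : (0:ℝ) < Real.sqrt r := Real.sqrt_pos.mpr hrR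
  have sqs : (0:ℝ) < Real.sqrt s := Real.sqrt_pos.mpr hsR
  have sπ : (0:ℝ) < Real.sqrt Real.pi := Real.sqrt_pos.mpr Real.pi_pos
  have Sp := Sf_pos hp
  have Sq := Sf_pos hq
  have Sr := Sf_pos hr
  have Ss := Sf_pos hs1
  have S2p := Sf_pos (n := 2*p) (by omega)
  have S2q := Sf_pos (n := 2*q) (by omega)
  have S2r := Sf_pos (n := 2*r) (by omega)
  have S2s := Sf_pos (n := 2*s) (by omega)
  -- the Sf-identity (**)
  have sqrt_pi_mul : ∀ n : ℕ, Real.sqrt (Real.pi * n) = Real.sqrt Real.pi * Real.sqrt n :=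
    fun n => Real.sqrt_mul Real.pi_pos.le _
  have ep := Sf_two_mul p
  have eq' := Sf_two_mul q
  have er := Sf_two_mul r
  have es := Sf_two_mul s
  rw [sqrt_pi_mul] at ep eq' er es
  have epqr : Sf (2*p) * Sf (2*q) * Sf (2*r) *
      (Real.sqrt Real.pi ^ 3 * (Real.sqrt p * Real.sqrt q * Real.sqrt r))
      = Sf p ^ 2 * Sf q ^ 2 * Sf r ^ 2 * 4 ^ s := by
    rw [hs, pow_add, pow_add]
    linear_combination (Sf (2*q) * (Real.sqrt Real.pi * Real.sqrt q) *
        (Sf (2*r) * (Real.sqrt Real.pi * Real.sqrt r))) * ep +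
      (Sf p ^ 2 * 4 ^ p * (Sf (2*r) * (Real.sqrt Real.pi * Real.sqrt r))) * eq' +
      (Sf p ^ 2 * 4 ^ p * (Sf q ^ 2 * 4 ^ q)) * er
  have starstar : Sf (2*p) * Sf (2*q) * Sf (2*r) * Sf s ^ 2 *
      (Real.pi * (Real.sqrt p * Real.sqrt q * Real.sqrt r))
      = Sf p ^ 2 * Sf q ^ 2 * Sf r ^ 2 * Sf (2*s) * Real.sqrt s := by
    have h4 : (0:ℝ) < 4 ^ s := by positivity
    apply mul_left_cancel₀ (mul_pos sπ h4).ne'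
    have hππ : Real.sqrt Real.pi * Real.sqrt Real.pi = Real.pi :=
      Real.mul_self_sqrt Real.pi_pos.le
    linear_combination (4 ^ s * Sf s ^ 2) * epqr -
      (Sf p ^ 2 * Sf q ^ 2 * Sf r ^ 2 * 4 ^ s) * es -
      (Real.sqrt Real.pi * 4 ^ s * Sf (2*p) * Sf (2*q) * Sf (2*r) * Sf s ^ 2 *
        (Real.sqrt p * Real.sqrt q * Real.sqrt r)) * hππ
  -- now pure field algebra
  have hfac : ((2 * s + 1).factorial : ℝ) = (2 * s + 1) * ((2 * s).factorial : ℝ) := by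
    rw [Nat.factorial_succ]; push_cast; ring
  unfold St
  rw [hfac]
  have f1 : (s.factorial : ℝ) ≠ 0 := Nat.cast_ne_zero.mpr s.factorial_ne_zero
  have f2 : (p.factorial : ℝ) ≠ 0 := Nat.cast_ne_zero.mpr p.factorial_ne_zero
  have f3 : (q.factorial : ℝ) ≠ 0 := Nat.cast_ne_zero.mpr q.factorial_ne_zero
  have f4 : (r.factorial : ℝ) ≠ 0 := Nat.cast_ne_zero.mpr r.factorial_ne_zero
  have f5 : ((2*s).factorial : ℝ) ≠ 0 := Nat.cast_ne_zero.mpr (2*s).factorial_ne_zero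
  have f6 : ((2*p).factorial : ℝ) ≠ 0 := Nat.cast_ne_zero.mpr (2*p).factorial_ne_zero
  have f7 : ((2*q).factorial : ℝ) ≠ 0 := Nat.cast_ne_zero.mpr (2*q).factorial_ne_zero
  have f8 : ((2*r).factorial : ℝ) ≠ 0 := Nat.cast_ne_zero.mpr (2*r).factorial_ne_zero
  have h2s1 : ((2:ℝ) * s + 1) ≠ 0 := by positivity
  have hG : ((s.factorial:ℝ) / Sf s) ^ 2 * (((2*p).factorial:ℝ) / Sf (2*p)) *
        (((2*q).factorial:ℝ) / Sf (2*q)) * (((2*r).factorial:ℝ) / Sf (2*r)) /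
        (((p.factorial:ℝ) / Sf p) ^ 2 * ((q.factorial:ℝ) / Sf q) ^ 2 *
          ((r.factorial:ℝ) / Sf r) ^ 2 * (((2*s).factorial:ℝ) / Sf (2*s)))
      = ((s.factorial:ℝ)^2 * (((2*p).factorial:ℝ) * ((2*q).factorial:ℝ) * ((2*r).factorial:ℝ))) /
          (((p.factorial:ℝ) * q.factorial * r.factorial)^2 * ((2*s).factorial:ℝ)) *
        ((Sf p ^ 2 * Sf q ^ 2 * Sf r ^ 2 * Sf (2*s)) / (Sf s ^ 2 * Sf (2*p) * Sf (2*q) * Sf (2*r))) := by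
    field_simp
  have hSf2 : (Sf p ^ 2 * Sf q ^ 2 * Sf r ^ 2 * Sf (2*s)) / (Sf s ^ 2 * Sf (2*p) * Sf (2*q) * Sf (2*r))
      = Real.pi * (Real.sqrt p * Real.sqrt q * Real.sqrt r) / Real.sqrt s := by
    rw [div_eq_div_iff (by positivity) sqs.ne']
    linear_combination -starstar
  rw [hG, hSf2]
  field_simp

lemma tendsto_floor_div (x : ℝ) (hx : 0 ≤ x) :
    Tendsto (fun ℓ : ℕ => ((⌊(ℓ:ℝ) * x⌋₊ : ℝ)) / ℓ) atTop (𝓝 x) := by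
  have hlow : Tendsto (fun ℓ : ℕ => x - 1/(ℓ:ℝ)) atTop (𝓝 x) := by
    simpa using tendsto_const_nhds.sub (tendsto_one_div_atTop_nhds_zero_nat : Tendsto (fun n : ℕ => 1 / (n:ℝ)) atTop (𝓝 0))
  refine tendsto_of_tendsto_of_tendsto_of_le_of_le' hlow tendsto_const_nhds ?_ ?_
  · filter_upwards [eventually_ge_atTop 1] with ℓ hℓ
    have hℓ0 : (0:ℝ) < ℓ := by exact_mod_cast hℓ
    have h1 : (ℓ:ℝ) * x - 1 ≤ (⌊(ℓ:ℝ) * x⌋₊ : ℝ) := (Nat.sub_one_lt_floor _).le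
    calc x - 1/(ℓ:ℝ) = ((ℓ:ℝ) * x - 1) / ℓ := by field_simp
    _ ≤ _ := by gcongr
  · filter_upwards [eventually_ge_atTop 1] with ℓ hℓ
    have hℓ0 : (0:ℝ) < ℓ := by exact_mod_cast hℓ
    have h2 : (⌊(ℓ:ℝ) * x⌋₊ : ℝ) ≤ (ℓ:ℝ) * x := Nat.floor_le (by positivity)
    calc (⌊(ℓ:ℝ) * x⌋₊ : ℝ) / ℓ ≤ (ℓ:ℝ) * x / ℓ := by gcongr
    _ = x := by field_simp

lemma aux_H (u : ℝ) (hu : 0 < u) (S P Q R : ℕ) (hS : 1 ≤ S) (hP : 1 ≤ P)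
    (hQ : 1 ≤ Q) (hR : 1 ≤ R) :
    (u^2)^2 * (Real.sqrt S / (Real.pi * (Real.sqrt P * Real.sqrt Q * Real.sqrt R) *
        (2 * (S:ℝ) + 1)))
      = Real.sqrt ((S:ℝ)/u^2) /
        (Real.pi * (Real.sqrt ((P:ℝ)/u^2) * Real.sqrt ((Q:ℝ)/u^2) * Real.sqrt ((R:ℝ)/u^2)) *
          (2 * ((S:ℝ)/u^2) + 1/u^2)) := by
  have h1 : ∀ n : ℕ, Real.sqrt ((n:ℝ)/u^2) = Real.sqrt n / u := fun n => by
    rw [Real.sqrt_div (Nat.cast_nonneg n), Real.sqrt_sq hu.le]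
  rw [h1, h1, h1, h1]
  have hPp : (0:ℝ) < Real.sqrt P := Real.sqrt_pos.mpr (by exact_mod_cast hP)
  have hQp : (0:ℝ) < Real.sqrt Q := Real.sqrt_pos.mpr (by exact_mod_cast hQ)
  have hRp : (0:ℝ) < Real.sqrt R := Real.sqrt_pos.mpr (by exact_mod_cast hR)
  have hSp : (0:ℝ) < 2 * (S:ℝ) + 1 := by positivity
  have hπ := Real.pi_pos
  field_simp

lemma val_eq (y₁ y₂ y₃ σ : ℝ) (h1 : 0 < y₁) (h2 : 0 < y₂) (h3 : 0 < y₃) (h4 : 0 < σ) :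
    Real.sqrt (σ/2) / (Real.pi * (Real.sqrt (y₁/2) * Real.sqrt (y₂/2) * Real.sqrt (y₃/2)) * σ)
      = 2 / Real.pi * (Real.sqrt (y₃ * y₂ * y₁ * σ))⁻¹ := by
  have hπ := Real.pi_pos
  have hL0 : 0 ≤ Real.sqrt (σ/2) /
      (Real.pi * (Real.sqrt (y₁/2) * Real.sqrt (y₂/2) * Real.sqrt (y₃/2)) * σ) := by positivity
  have hR0 : 0 ≤ 2 / Real.pi * (Real.sqrt (y₃ * y₂ * y₁ * σ))⁻¹ := by positivity
  have hsq : (Real.sqrt (σ/2) /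
        (Real.pi * (Real.sqrt (y₁/2) * Real.sqrt (y₂/2) * Real.sqrt (y₃/2)) * σ)) ^ 2
      = (2 / Real.pi * (Real.sqrt (y₃ * y₂ * y₁ * σ))⁻¹) ^ 2 := by
    simp only [div_pow, mul_pow, inv_pow,
      Real.sq_sqrt (by positivity : (0:ℝ) ≤ σ/2),
      Real.sq_sqrt (by positivity : (0:ℝ) ≤ y₁/2),
      Real.sq_sqrt (by positivity : (0:ℝ) ≤ y₂/2),
      Real.sq_sqrt (by positivity : (0:ℝ) ≤ y₃/2),
      Real.sq_sqrt (by positivity : (0:ℝ) ≤ y₃ * y₂ * y₁ * σ)]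
    field_simp
  calc Real.sqrt (σ/2) /
        (Real.pi * (Real.sqrt (y₁/2) * Real.sqrt (y₂/2) * Real.sqrt (y₃/2)) * σ)
      = Real.sqrt ((Real.sqrt (σ/2) /
          (Real.pi * (Real.sqrt (y₁/2) * Real.sqrt (y₂/2) * Real.sqrt (y₃/2)) * σ)) ^ 2) :=
        (Real.sqrt_sq hL0).symm
    _ = Real.sqrt ((2 / Real.pi * (Real.sqrt (y₃ * y₂ * y₁ * σ))⁻¹) ^ 2) := by rw [hsq]
    _ = 2 / Real.pi * (Real.sqrt (y₃ * y₂ * y₁ * σ))⁻¹ := Real.sqrt_sq hR0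

/-- The squared Wigner 3j symbol with zero magnetic indices (for `a+b+c` even
satisfying the triangle conditions). -/
noncomputable def wigner3jSq (a b c : ℕ) : ℝ :=
  (((((a + b + c) / 2).factorial : ℝ)) ^ 2 /
      ((((b + c - a) / 2).factorial : ℝ) * (((a + c - b) / 2).factorial : ℝ) *
          (((a + b - c) / 2).factorial : ℝ)) ^ 2) *
    (((b + c - a).factorial : ℝ) * ((a + c - b).factorial : ℝ) *
        ((a + b - c).factorial : ℝ)) / ((a + b + c + 1).factorial : ℝ)

lemma wigner_eq (a b c : ℕ) (h1 : a + 2 ≤ b + c) (h2 : b + 2 ≤ a + c) (h3 : c + 2 ≤ a + b)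
    (hev : Even (a + b + c)) :
    wigner3jSq a b c
      = (St ((a+b+c)/2) ^ 2 * St (2*((b+c-a)/2)) * St (2*((a+c-b)/2)) * St (2*((a+b-c)/2))) /
          (St ((b+c-a)/2) ^ 2 * St ((a+c-b)/2) ^ 2 * St ((a+b-c)/2) ^ 2 * St (2*((a+b+c)/2))) *
        (Real.sqrt (((a+b+c)/2 : ℕ) : ℝ) /
          (Real.pi * (Real.sqrt (((b+c-a)/2 : ℕ) : ℝ) * Real.sqrt (((a+c-b)/2 : ℕ) : ℝ) *
            Real.sqrt (((a+b-c)/2 : ℕ) : ℝ)) * (2 * (((a+b+c)/2 : ℕ) : ℝ) + 1))) := by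
  rw [Nat.even_iff] at hev
  set p := (b+c-a)/2 with hp'
  set q := (a+c-b)/2 with hq'
  set r := (a+b-c)/2 with hr'
  set s := (a+b+c)/2 with hs'
  have e1 : b + c - a = 2 * p := by omega
  have e2 : a + c - b = 2 * q := by omega
  have e3 : a + b - c = 2 * r := by omega
  have e4 : a + b + c = 2 * s := by omega
  have hp : 1 ≤ p := by omega
  have hq : 1 ≤ q := by omega
  have hr : 1 ≤ r := by omega
  have hs : s = p + q + r := by omega
  unfold wigner3jSq
  rw [e1, e2, e3, e4]
  rw [Nat.mul_div_cancel_left p (by norm_num), Nat.mul_div_cancel_left q (by norm_num),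
    Nat.mul_div_cancel_left r (by norm_num), Nat.mul_div_cancel_left s (by norm_num)]
  exact key_identity p q r s hp hq hr hs

/-- For `x₁, x₂, x₃ > 0` satisfying the strict triangle inequalities,
with `g_ℓ = (⌊ℓx₁⌋ ⌊ℓx₂⌋ ⌊ℓx₃⌋; 0 0 0)²`, one has
`ℓ² g_ℓ → (2/π) ((x₁+x₂-x₃)(x₁-x₂+x₃)(-x₁+x₂+x₃)(x₁+x₂+x₃))^{-1/2}`
as `ℓ → ∞` along the `ℓ` for which `⌊ℓx₁⌋+⌊ℓx₂⌋+⌊ℓx₃⌋` is even. -/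
theorem stmt_12 (x₁ x₂ x₃ : ℝ) (h₁ : 0 < x₁) (h₂ : 0 < x₂) (h₃ : 0 < x₃)
    (t₁ : x₁ < x₂ + x₃) (t₂ : x₂ < x₁ + x₃) (t₃ : x₃ < x₁ + x₂) :
    Tendsto
      (fun ℓ : ℕ => (ℓ : ℝ) ^ 2 *
        wigner3jSq ⌊(ℓ : ℝ) * x₁⌋₊ ⌊(ℓ : ℝ) * x₂⌋₊ ⌊(ℓ : ℝ) * x₃⌋₊)
      (atTop ⊓ Filter.principal
        {ℓ : ℕ | Even (⌊(ℓ : ℝ) * x₁⌋₊ + ⌊(ℓ : ℝ) * x₂⌋₊ + ⌊(ℓ : ℝ) * x₃⌋₊)})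
      (nhds (2 / Real.pi *
        (Real.sqrt ((x₁ + x₂ - x₃) * (x₁ - x₂ + x₃) * (-x₁ + x₂ + x₃) * (x₁ + x₂ + x₃)))⁻¹)) := by
  have hπ := Real.pi_pos
  set y₃ := x₁ + x₂ - x₃ with hy₃def
  set y₂ := x₁ - x₂ + x₃ with hy₂def
  set y₁ := -x₁ + x₂ + x₃ with hy₁def
  set σ := x₁ + x₂ + x₃ with hσdef
  have hy₁ : 0 < y₁ := by rw [hy₁def]; linarith
  have hy₂ : 0 < y₂ := by rw [hy₂def]; linarith
  have hy₃ : 0 < y₃ := by rw [hy₃def]; linarith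
  have hσ : 0 < σ := by rw [hσdef]; linarith
  set a : ℕ → ℕ := fun ℓ => ⌊(ℓ : ℝ) * x₁⌋₊ with hadef
  set b : ℕ → ℕ := fun ℓ => ⌊(ℓ : ℝ) * x₂⌋₊ with hbdef
  set c : ℕ → ℕ := fun ℓ => ⌊(ℓ : ℝ) * x₃⌋₊ with hcdef
  set P : ℕ → ℕ := fun ℓ => (b ℓ + c ℓ - a ℓ) / 2 with hPdef
  set Q : ℕ → ℕ := fun ℓ => (a ℓ + c ℓ - b ℓ) / 2 with hQdef
  set R : ℕ → ℕ := fun ℓ => (a ℓ + b ℓ - c ℓ) / 2 with hRdef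
  set S : ℕ → ℕ := fun ℓ => (a ℓ + b ℓ + c ℓ) / 2 with hSdef
  set F : Filter ℕ := atTop ⊓ Filter.principal
      {ℓ : ℕ | Even (⌊(ℓ : ℝ) * x₁⌋₊ + ⌊(ℓ : ℝ) * x₂⌋₊ + ⌊(ℓ : ℝ) * x₃⌋₊)} with hFdef
  have hFle : F ≤ atTop := inf_le_left
  -- floor limits
  have ha' : Tendsto (fun ℓ : ℕ => ((a ℓ : ℕ) : ℝ) / ℓ) atTop (𝓝 x₁) :=
    tendsto_floor_div x₁ h₁.le
  have hb' : Tendsto (fun ℓ : ℕ => ((b ℓ : ℕ) : ℝ) / ℓ) atTop (𝓝 x₂) :=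
    tendsto_floor_div x₂ h₂.le
  have hc' : Tendsto (fun ℓ : ℕ => ((c ℓ : ℕ) : ℝ) / ℓ) atTop (𝓝 x₃) :=
    tendsto_floor_div x₃ h₃.le
  have hinv : Tendsto (fun ℓ : ℕ => 1 / (ℓ : ℝ)) atTop (𝓝 0) :=
    tendsto_one_div_atTop_nhds_zero_nat
  -- eventual strict triangle inequalities with slack 2
  have triangle : ∀ (u v w : ℕ → ℕ), Tendsto (fun ℓ : ℕ => ((u ℓ : ℕ) : ℝ) / ℓ) atTop (𝓝 x₁) →
      True → False → True := by intro _ _ _ _ _ h; exact h.elim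
  clear triangle
  have htri : ∀ (u v w : ℕ → ℕ) (z₁ z₂ z₃ : ℝ),
      Tendsto (fun ℓ : ℕ => ((u ℓ : ℕ) : ℝ) / ℓ) atTop (𝓝 z₁) →
      Tendsto (fun ℓ : ℕ => ((v ℓ : ℕ) : ℝ) / ℓ) atTop (𝓝 z₂) →
      Tendsto (fun ℓ : ℕ => ((w ℓ : ℕ) : ℝ) / ℓ) atTop (𝓝 z₃) →
      z₁ < z₂ + z₃ →
      ∀ᶠ ℓ in atTop, u ℓ + 2 ≤ v ℓ + w ℓ := by
    intro u v w z₁ z₂ z₃ hu hv hw hz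
    have hlim : Tendsto (fun ℓ : ℕ => ((u ℓ : ℕ) : ℝ) / ℓ + 2 * (1 / (ℓ : ℝ)) -
        (((v ℓ : ℕ) : ℝ) / ℓ + ((w ℓ : ℕ) : ℝ) / ℓ)) atTop (𝓝 (z₁ + 2 * 0 - (z₂ + z₃))) :=
      (hu.add (hinv.const_mul 2)).sub (hv.add hw)
    filter_upwards [hlim.eventually_lt_const (by linarith : z₁ + 2 * 0 - (z₂ + z₃) < 0),
      eventually_ge_atTop 1] with ℓ hlt hℓ
    have hl0 : (0 : ℝ) < ℓ := by exact_mod_cast hℓ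
    have hrw : ((u ℓ : ℝ) + 2 - ((v ℓ : ℝ) + (w ℓ : ℝ))) / ℓ
        = ((u ℓ : ℕ) : ℝ) / ℓ + 2 * (1 / (ℓ : ℝ)) -
          (((v ℓ : ℕ) : ℝ) / ℓ + ((w ℓ : ℕ) : ℝ) / ℓ) := by ring
    have hX : ((u ℓ : ℝ) + 2 - ((v ℓ : ℝ) + (w ℓ : ℝ))) < 0 := by
      by_contra hcon
      push_neg at hcon
      have h0 : 0 ≤ ((u ℓ : ℝ) + 2 - ((v ℓ : ℝ) + (w ℓ : ℝ))) / ℓ := div_nonneg hcon hl0.le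
      rw [hrw] at h0
      linarith
    have : (u ℓ : ℝ) + 2 < (v ℓ : ℝ) + (w ℓ : ℝ) := by linarith
    exact_mod_cast this.le
  have hT1 : ∀ᶠ ℓ in atTop, a ℓ + 2 ≤ b ℓ + c ℓ := htri a b c x₁ x₂ x₃ ha' hb' hc' t₁
  have hT2 : ∀ᶠ ℓ in atTop, b ℓ + 2 ≤ a ℓ + c ℓ := htri b a c x₂ x₁ x₃ hb' ha' hc' t₂
  have hT3 : ∀ᶠ ℓ in atTop, c ℓ + 2 ≤ a ℓ + b ℓ := htri c a b x₃ x₁ x₂ hc' ha' hb' t₃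
  have hEv : ∀ᶠ ℓ in F, Even (a ℓ + b ℓ + c ℓ) := by
    rw [hFdef]
    exact eventually_inf_principal.mpr (Eventually.of_forall fun ℓ h => h)
  have hGood : ∀ᶠ ℓ in F, a ℓ + 2 ≤ b ℓ + c ℓ ∧ b ℓ + 2 ≤ a ℓ + c ℓ ∧ c ℓ + 2 ≤ a ℓ + b ℓ ∧
      (a ℓ + b ℓ + c ℓ) % 2 = 0 ∧ 1 ≤ ℓ := by
    filter_upwards [hT1.filter_mono hFle, hT2.filter_mono hFle, hT3.filter_mono hFle, hEv,
      (eventually_ge_atTop 1).filter_mono hFle] with ℓ g1 g2 g3 g4 g5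
    exact ⟨g1, g2, g3, Nat.even_iff.mp g4, g5⟩
  -- limits of P/ℓ etc along F
  have hdivlim : ∀ (u : ℕ → ℕ) (z : ℝ),
      Tendsto (fun ℓ : ℕ => ((u ℓ : ℕ) : ℝ)) F (𝓝 0) → True := fun _ _ _ => trivial
  clear hdivlim
  have hP' : Tendsto (fun ℓ : ℕ => ((P ℓ : ℕ) : ℝ) / ℓ) F (𝓝 (y₁ / 2)) := by
    have base : Tendsto (fun ℓ : ℕ => (((b ℓ : ℕ) : ℝ) / ℓ + ((c ℓ : ℕ) : ℝ) / ℓ -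
        ((a ℓ : ℕ) : ℝ) / ℓ) / 2) F (𝓝 ((x₂ + x₃ - x₁) / 2)) :=
      (((hb'.add hc').sub ha').div_const 2).mono_left hFle
    have hval : (x₂ + x₃ - x₁) / 2 = y₁ / 2 := by rw [hy₁def]; ring
    rw [hval] at base
    refine base.congr' ?_
    filter_upwards [hGood] with ℓ ⟨g1, g2, g3, g4, g5⟩
    have e1 : 2 * P ℓ = b ℓ + c ℓ - a ℓ := by simp only [hPdef]; omega
    have hle : a ℓ ≤ b ℓ + c ℓ := by omega
    have hcast : 2 * ((P ℓ : ℕ) : ℝ) = (b ℓ : ℝ) + (c ℓ : ℝ) - (a ℓ : ℝ) := by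
      have := congrArg (fun n : ℕ => (n : ℝ)) e1
      push_cast [Nat.cast_sub hle] at this
      linarith
    have hl0 : (0 : ℝ) < ℓ := by exact_mod_cast g5
    have hPval : ((P ℓ : ℕ) : ℝ) = ((b ℓ : ℝ) + (c ℓ : ℝ) - (a ℓ : ℝ)) / 2 := by linarith
    rw [hPval]
    ring
  have hQ' : Tendsto (fun ℓ : ℕ => ((Q ℓ : ℕ) : ℝ) / ℓ) F (𝓝 (y₂ / 2)) := by
    have base : Tendsto (fun ℓ : ℕ => (((a ℓ : ℕ) : ℝ) / ℓ + ((c ℓ : ℕ) : ℝ) / ℓ -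
        ((b ℓ : ℕ) : ℝ) / ℓ) / 2) F (𝓝 ((x₁ + x₃ - x₂) / 2)) :=
      (((ha'.add hc').sub hb').div_const 2).mono_left hFle
    have hval : (x₁ + x₃ - x₂) / 2 = y₂ / 2 := by rw [hy₂def]; ring
    rw [hval] at base
    refine base.congr' ?_
    filter_upwards [hGood] with ℓ ⟨g1, g2, g3, g4, g5⟩
    have e1 : 2 * Q ℓ = a ℓ + c ℓ - b ℓ := by simp only [hQdef]; omega
    have hle : b ℓ ≤ a ℓ + c ℓ := by omega
    have hcast : 2 * ((Q ℓ : ℕ) : ℝ) = (a ℓ : ℝ) + (c ℓ : ℝ) - (b ℓ : ℝ) := by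
      have := congrArg (fun n : ℕ => (n : ℝ)) e1
      push_cast [Nat.cast_sub hle] at this
      linarith
    have hQval : ((Q ℓ : ℕ) : ℝ) = ((a ℓ : ℝ) + (c ℓ : ℝ) - (b ℓ : ℝ)) / 2 := by linarith
    rw [hQval]
    ring
  have hR' : Tendsto (fun ℓ : ℕ => ((R ℓ : ℕ) : ℝ) / ℓ) F (𝓝 (y₃ / 2)) := by
    have base : Tendsto (fun ℓ : ℕ => (((a ℓ : ℕ) : ℝ) / ℓ + ((b ℓ : ℕ) : ℝ) / ℓ -
        ((c ℓ : ℕ) : ℝ) / ℓ) / 2) F (𝓝 ((x₁ + x₂ - x₃) / 2)) :=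
      (((ha'.add hb').sub hc').div_const 2).mono_left hFle
    have hval : (x₁ + x₂ - x₃) / 2 = y₃ / 2 := by rw [hy₃def]
    rw [hval] at base
    refine base.congr' ?_
    filter_upwards [hGood] with ℓ ⟨g1, g2, g3, g4, g5⟩
    have e1 : 2 * R ℓ = a ℓ + b ℓ - c ℓ := by simp only [hRdef]; omega
    have hle : c ℓ ≤ a ℓ + b ℓ := by omega
    have hcast : 2 * ((R ℓ : ℕ) : ℝ) = (a ℓ : ℝ) + (b ℓ : ℝ) - (c ℓ : ℝ) := by
      have := congrArg (fun n : ℕ => (n : ℝ)) e1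
      push_cast [Nat.cast_sub hle] at this
      linarith
    have hRval : ((R ℓ : ℕ) : ℝ) = ((a ℓ : ℝ) + (b ℓ : ℝ) - (c ℓ : ℝ)) / 2 := by linarith
    rw [hRval]
    ring
  have hS' : Tendsto (fun ℓ : ℕ => ((S ℓ : ℕ) : ℝ) / ℓ) F (𝓝 (σ / 2)) := by
    have base : Tendsto (fun ℓ : ℕ => (((a ℓ : ℕ) : ℝ) / ℓ + ((b ℓ : ℕ) : ℝ) / ℓ +
        ((c ℓ : ℕ) : ℝ) / ℓ) / 2) F (𝓝 ((x₁ + x₂ + x₃) / 2)) :=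
      (((ha'.add hb').add hc').div_const 2).mono_left hFle
    have hval : (x₁ + x₂ + x₃) / 2 = σ / 2 := by rw [hσdef]
    rw [hval] at base
    refine base.congr' ?_
    filter_upwards [hGood] with ℓ ⟨g1, g2, g3, g4, g5⟩
    have e1 : 2 * S ℓ = a ℓ + b ℓ + c ℓ := by simp only [hSdef]; omega
    have hcast : 2 * ((S ℓ : ℕ) : ℝ) = (a ℓ : ℝ) + (b ℓ : ℝ) + (c ℓ : ℝ) := by
      have := congrArg (fun n : ℕ => (n : ℝ)) e1
      push_cast at this
      linarith
    have hSval : ((S ℓ : ℕ) : ℝ) = ((a ℓ : ℝ) + (b ℓ : ℝ) + (c ℓ : ℝ)) / 2 := by linarith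
    rw [hSval]
    ring
  -- tendsto to atTop
  have hcastF : Tendsto (fun ℓ : ℕ => (ℓ : ℝ)) F atTop :=
    tendsto_natCast_atTop_atTop.mono_left hFle
  have htop : ∀ (u : ℕ → ℕ) (z : ℝ), 0 < z →
      Tendsto (fun ℓ : ℕ => ((u ℓ : ℕ) : ℝ) / ℓ) F (𝓝 (z / 2)) → Tendsto u F atTop := by
    intro u z hz hu
    have hmul : Tendsto (fun ℓ : ℕ => (z / 4) * (ℓ : ℝ)) F atTop :=
      Tendsto.const_mul_atTop (by linarith) hcastF
    have hmono : ∀ᶠ ℓ : ℕ in F, (z / 4) * (ℓ : ℝ) ≤ ((u ℓ : ℕ) : ℝ) := by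
      filter_upwards [hu.eventually_const_lt (show z / 4 < z / 2 by linarith),
        (eventually_ge_atTop 1).filter_mono hFle] with ℓ hlt hℓ
      have hl0 : (0 : ℝ) < ℓ := by exact_mod_cast hℓ
      have h' : z / 4 < ((u ℓ : ℕ) : ℝ) / ℓ := hlt
      have := (lt_div_iff₀ hl0).mp h'
      linarith
    exact tendsto_natCast_atTop_iff.mp (tendsto_atTop_mono' F hmono hmul)
  have hPtop : Tendsto P F atTop := htop P y₁ hy₁ hP'
  have hQtop : Tendsto Q F atTop := htop Q y₂ hy₂ hQ'
  have hRtop : Tendsto R F atTop := htop R y₃ hy₃ hR'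
  have hStop : Tendsto S F atTop := htop S σ hσ hS'
  have h2Ptop : Tendsto (fun ℓ => 2 * P ℓ) F atTop :=
    tendsto_atTop_mono (fun ℓ => by omega) hPtop
  have h2Qtop : Tendsto (fun ℓ => 2 * Q ℓ) F atTop :=
    tendsto_atTop_mono (fun ℓ => by omega) hQtop
  have h2Rtop : Tendsto (fun ℓ => 2 * R ℓ) F atTop :=
    tendsto_atTop_mono (fun ℓ => by omega) hRtop
  have h2Stop : Tendsto (fun ℓ => 2 * S ℓ) F atTop :=
    tendsto_atTop_mono (fun ℓ => by omega) hStop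
  -- Stirling ratio part
  have hSt : Tendsto (fun n : ℕ => St n) atTop (𝓝 1) := tendsto_fact_div_Sf
  have hstS : Tendsto (fun ℓ => St (S ℓ)) F (𝓝 1) := hSt.comp hStop
  have hstP : Tendsto (fun ℓ => St (P ℓ)) F (𝓝 1) := hSt.comp hPtop
  have hstQ : Tendsto (fun ℓ => St (Q ℓ)) F (𝓝 1) := hSt.comp hQtop
  have hstR : Tendsto (fun ℓ => St (R ℓ)) F (𝓝 1) := hSt.comp hRtop
  have hst2P : Tendsto (fun ℓ => St (2 * P ℓ)) F (𝓝 1) := hSt.comp h2Ptop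
  have hst2Q : Tendsto (fun ℓ => St (2 * Q ℓ)) F (𝓝 1) := hSt.comp h2Qtop
  have hst2R : Tendsto (fun ℓ => St (2 * R ℓ)) F (𝓝 1) := hSt.comp h2Rtop
  have hst2S : Tendsto (fun ℓ => St (2 * S ℓ)) F (𝓝 1) := hSt.comp h2Stop
  have hG : Tendsto (fun ℓ => (St (S ℓ) ^ 2 * St (2 * P ℓ) * St (2 * Q ℓ) * St (2 * R ℓ)) /
      (St (P ℓ) ^ 2 * St (Q ℓ) ^ 2 * St (R ℓ) ^ 2 * St (2 * S ℓ))) F (𝓝 1) := by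
    have hnum : Tendsto (fun ℓ => St (S ℓ) ^ 2 * St (2 * P ℓ) * St (2 * Q ℓ) * St (2 * R ℓ)) F
        (𝓝 (1 ^ 2 * 1 * 1 * 1)) := (((hstS.pow 2).mul hst2P).mul hst2Q).mul hst2R
    have hden : Tendsto (fun ℓ => St (P ℓ) ^ 2 * St (Q ℓ) ^ 2 * St (R ℓ) ^ 2 * St (2 * S ℓ)) F
        (𝓝 (1 ^ 2 * 1 ^ 2 * 1 ^ 2 * 1)) := (((hstP.pow 2).mul (hstQ.pow 2)).mul (hstR.pow 2)).mul hst2S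
    have := hnum.div hden (by norm_num)
    simpa [Pi.div_def] using this
  -- H part
  have h1F : Tendsto (fun ℓ : ℕ => 1 / (ℓ : ℝ)) F (𝓝 0) := hinv.mono_left hFle
  have hnumH : Tendsto (fun ℓ : ℕ => Real.sqrt (((S ℓ : ℕ) : ℝ) / ℓ)) F
      (𝓝 (Real.sqrt (σ / 2))) := hS'.sqrt
  have hdenH : Tendsto (fun ℓ : ℕ => Real.pi * (Real.sqrt (((P ℓ : ℕ) : ℝ) / ℓ) *
      Real.sqrt (((Q ℓ : ℕ) : ℝ) / ℓ) * Real.sqrt (((R ℓ : ℕ) : ℝ) / ℓ)) *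
      (2 * (((S ℓ : ℕ) : ℝ) / ℓ) + 1 / (ℓ : ℝ))) F
      (𝓝 (Real.pi * (Real.sqrt (y₁ / 2) * Real.sqrt (y₂ / 2) * Real.sqrt (y₃ / 2)) *
        (2 * (σ / 2) + 0))) :=
    (tendsto_const_nhds.mul ((hP'.sqrt.mul hQ'.sqrt).mul hR'.sqrt)).mul
      ((hS'.const_mul 2).add h1F)
  have s1 : (0:ℝ) < Real.sqrt (y₁ / 2) := Real.sqrt_pos.mpr (by linarith)
  have s2 : (0:ℝ) < Real.sqrt (y₂ / 2) := Real.sqrt_pos.mpr (by linarith)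
  have s3 : (0:ℝ) < Real.sqrt (y₃ / 2) := Real.sqrt_pos.mpr (by linarith)
  have hdenpos : (0:ℝ) < Real.pi * (Real.sqrt (y₁ / 2) * Real.sqrt (y₂ / 2) *
      Real.sqrt (y₃ / 2)) * (2 * (σ / 2) + 0) := by
    apply mul_pos (mul_pos hπ (mul_pos (mul_pos s1 s2) s3))
    linarith
  have hH0 := hnumH.div hdenH hdenpos.ne'
  rw [show (2 * (σ / 2) + 0 : ℝ) = σ by ring] at hH0
  rw [val_eq y₁ y₂ y₃ σ hy₁ hy₂ hy₃ hσ] at hH0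
  have hHfun : Tendsto (fun ℓ : ℕ => (ℓ : ℝ) ^ 2 * (Real.sqrt ((S ℓ : ℕ) : ℝ) /
      (Real.pi * (Real.sqrt ((P ℓ : ℕ) : ℝ) * Real.sqrt ((Q ℓ : ℕ) : ℝ) *
        Real.sqrt ((R ℓ : ℕ) : ℝ)) * (2 * ((S ℓ : ℕ) : ℝ) + 1)))) F
      (𝓝 (2 / Real.pi * (Real.sqrt (y₃ * y₂ * y₁ * σ))⁻¹)) := by
    refine hH0.congr' ?_
    filter_upwards [hGood] with ℓ ⟨g1, g2, g3, g4, g5⟩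
    have hp1 : 1 ≤ P ℓ := by simp only [hPdef]; omega
    have hq1 : 1 ≤ Q ℓ := by simp only [hQdef]; omega
    have hr1 : 1 ≤ R ℓ := by simp only [hRdef]; omega
    have hs1 : 1 ≤ S ℓ := by simp only [hSdef]; omega
    have hu : ((ℓ : ℝ)) = (Real.sqrt (ℓ : ℝ)) ^ 2 := (Real.sq_sqrt (Nat.cast_nonneg ℓ)).symm
    simp only [Pi.div_apply]
    rw [hu]
    exact (aux_H (Real.sqrt (ℓ : ℝ))
      (Real.sqrt_pos.mpr (by exact_mod_cast g5)) (S ℓ) (P ℓ) (Q ℓ) (R ℓ) hs1 hp1 hq1 hr1).symm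
  -- final assembly
  have hfinal := hG.mul hHfun
  rw [one_mul] at hfinal
  refine Tendsto.congr' ?_ hfinal
  filter_upwards [hGood] with ℓ ⟨g1, g2, g3, g4, g5⟩
  have hev : Even (a ℓ + b ℓ + c ℓ) := Nat.even_iff.mpr g4
  have hw := wigner_eq ⌊(ℓ : ℝ) * x₁⌋₊ ⌊(ℓ : ℝ) * x₂⌋₊ ⌊(ℓ : ℝ) * x₃⌋₊ g1 g2 g3 hev
  rw [hw]
  simp only [hPdef, hQdef, hRdef, hSdef, hadef, hbdef, hcdef]
  ring
end

section
/- $\lim_{\ell \to \infty} \ell^2 \left(\begin{smallmatrix} \ell & \ell & \ell \\ 0 & 0 & 0 \end{smallmatrix}\right)^2 = \frac{2}{\pi\sqrt{3}}$, where the squared Wigner 3j symbol with all indices equal to $\ell$ and all magnetic numbers zero equals $\frac{((3\ell/2)!)^2}{((\ell/2)!)^6}\cdot\frac{(\ell!)^3}{(3\ell+1)!}$, the limit taken along even $\ell$. -/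
open Filter Real

namespace Stmt13Aux

open Stirling Topology

lemma s_pos {m : ℕ} (hm : 0 < m) : 0 < stirlingSeq m := by
  obtain ⟨k, rfl⟩ := Nat.exists_eq_succ_of_ne_zero hm.ne'
  exact Stirling.stirlingSeq'_pos k

lemma fact_eq {m : ℕ} (hm : 0 < m) :
    (m.factorial : ℝ) = stirlingSeq m * (Real.sqrt (2*m) * ((m:ℝ)/Real.exp 1)^m) := by
  have hm' : (0:ℝ) < (m:ℝ) := by exact_mod_cast hm
  have h1 : 0 < Real.sqrt (2*m) := Real.sqrt_pos.2 (by linarith)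
  have h2 : (0:ℝ) < ((m:ℝ)/Real.exp 1)^m := pow_pos (div_pos hm' (Real.exp_pos 1)) m
  rw [Stirling.stirlingSeq, div_mul_cancel₀ _ (mul_pos h1 h2).ne']

lemma sqrt_part {x : ℝ} (hx : 0 < x) :
    Real.sqrt (6*x)^2 * Real.sqrt (4*x)^3 / (Real.sqrt (2*x)^6 * Real.sqrt (12*x))
      = Real.sqrt 3 / x := by
  have h6 : Real.sqrt (6*x)^2 = 6*x := Real.sq_sqrt (by linarith)
  have h4 : Real.sqrt (4*x)^3 = (4*x) * Real.sqrt (4*x) := by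
    rw [pow_succ, Real.sq_sqrt (by linarith)]
  have h2 : Real.sqrt (2*x)^6 = (2*x)^3 := by
    rw [show (6:ℕ) = 2*3 by rfl, pow_mul, Real.sq_sqrt (by linarith)]
  have h12 : Real.sqrt (12*x) = Real.sqrt 3 * Real.sqrt (4*x) := by
    rw [show (12:ℝ)*x = 3*(4*x) by ring, Real.sqrt_mul (by norm_num)]
  have hs4 : 0 < Real.sqrt (4*x) := Real.sqrt_pos.2 (by linarith)
  have h3 : Real.sqrt 3 * Real.sqrt 3 = 3 := Real.mul_self_sqrt (by norm_num)
  have h3pos : 0 < Real.sqrt 3 := Real.sqrt_pos.2 (by norm_num)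
  rw [h6, h4, h2, h12]
  rw [div_eq_div_iff (by positivity) hx.ne']
  linear_combination (-8*x^3*Real.sqrt (4*x)) * h3

lemma key_id {n : ℕ} (hn : 0 < n) :
    ((2*n : ℕ) : ℝ)^2 * wigner3jSq (2*n) (2*n) (2*n)
      = (stirlingSeq (3*n)^2 * stirlingSeq (2*n)^3 / (stirlingSeq n ^6 * stirlingSeq (6*n)))
        * (4 * Real.sqrt 3 * (n:ℝ) / (6*(n:ℝ)+1)) := by
  have e1 : (2*n+2*n+2*n)/2 = 3*n := by omega
  have e3 : (2*n+2*n-2*n)/2 = n := by omega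
  have e2 : 2*n+2*n-2*n = 2*n := by omega
  have e4 : 2*n+2*n+2*n+1 = 6*n+1 := by omega
  rw [wigner3jSq, e1, e3, e2, e4, show 6*n+1 = (6*n)+1 from rfl, Nat.factorial_succ,
    fact_eq (show 0 < 3*n by omega), fact_eq (show 0 < 2*n by omega), fact_eq hn]
  push_cast
  rw [fact_eq (show 0 < 6*n by omega)]
  push_cast
  set x : ℝ := (n:ℝ) with hxdef
  have hx : 0 < x := by rw [hxdef]; exact_mod_cast hn
  have hE : (0:ℝ) < Real.exp 1 := Real.exp_pos 1
  rw [show (2:ℝ)*(3*x) = 6*x by ring, show (2:ℝ)*(2*x) = 4*x by ring,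
      show (2:ℝ)*(6*x) = 12*x by ring]
  set a3 := stirlingSeq (3*n)
  set a2 := stirlingSeq (2*n)
  set a1 := stirlingSeq n with ha1def
  set a6 := stirlingSeq (6*n)
  have ha1 : 0 < a1 := s_pos hn
  have ha6 : 0 < a6 := s_pos (by omega)
  have hs2 : 0 < Real.sqrt (2*x) := Real.sqrt_pos.2 (by linarith)
  have hs12 : 0 < Real.sqrt (12*x) := Real.sqrt_pos.2 (by linarith)
  have hp1 : (0:ℝ) < (x/Real.exp 1)^n := pow_pos (div_pos hx hE) n
  have hp6 : (0:ℝ) < (6*x/Real.exp 1)^(6*n) := pow_pos (div_pos (by linarith) hE) _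
  have hkey : ((3*x/Real.exp 1)^(3*n))^2 * ((2*x/Real.exp 1)^(2*n))^3
      = ((x/Real.exp 1)^n)^6 * (6*x/Real.exp 1)^(6*n) := by
    rw [← pow_mul, ← pow_mul, ← pow_mul, show 3*n*2 = 6*n by ring,
      show 2*n*3 = 6*n by ring, show n*6 = 6*n by ring, ← mul_pow, ← mul_pow]
    congr 1
    ring
  calc (2*x)^2 *
        ((a3 * (Real.sqrt (6*x) * (3*x/Real.exp 1)^(3*n)))^2 /
          ((a1 * (Real.sqrt (2*x) * (x/Real.exp 1)^n)) * (a1 * (Real.sqrt (2*x) * (x/Real.exp 1)^n)) *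
            (a1 * (Real.sqrt (2*x) * (x/Real.exp 1)^n)))^2 *
          ((a2 * (Real.sqrt (4*x) * (2*x/Real.exp 1)^(2*n))) * (a2 * (Real.sqrt (4*x) * (2*x/Real.exp 1)^(2*n))) *
            (a2 * (Real.sqrt (4*x) * (2*x/Real.exp 1)^(2*n)))) /
          ((6*x+1) * (a6 * (Real.sqrt (12*x) * (6*x/Real.exp 1)^(6*n)))))
      = (a3^2 * a2^3 / (a1^6 * a6)) *
          (Real.sqrt (6*x)^2 * Real.sqrt (4*x)^3 / (Real.sqrt (2*x)^6 * Real.sqrt (12*x))) *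
          ((((3*x/Real.exp 1)^(3*n))^2 * ((2*x/Real.exp 1)^(2*n))^3) /
            (((x/Real.exp 1)^n)^6 * (6*x/Real.exp 1)^(6*n))) *
          ((2*x)^2 / (6*x+1)) := by
        have hd : (0:ℝ) < 6*x+1 := by linarith
        field_simp
    _ = (a3^2 * a2^3 / (a1^6 * a6)) * (Real.sqrt 3 / x) * 1 * ((2*x)^2 / (6*x+1)) := by
        rw [hkey, div_self (by positivity), sqrt_part hx]
    _ = (a3^2 * a2^3 / (a1^6 * a6)) * (4 * Real.sqrt 3 * x / (6*x+1)) := by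
        field_simp
        ring

lemma lim_S : Tendsto (fun n : ℕ =>
    stirlingSeq (3*n)^2 * stirlingSeq (2*n)^3 / (stirlingSeq n ^6 * stirlingSeq (6*n)))
    atTop (𝓝 ((Real.sqrt π)^2 * (Real.sqrt π)^3 / ((Real.sqrt π)^6 * Real.sqrt π))) := by
  have h3 : Tendsto (fun n : ℕ => stirlingSeq (3*n)) atTop (𝓝 (Real.sqrt π)) :=
    tendsto_stirlingSeq_sqrt_pi.comp (tendsto_atTop_mono (fun n => by simpa using (by omega : n ≤ 3*n)) tendsto_id)
  have h2 : Tendsto (fun n : ℕ => stirlingSeq (2*n)) atTop (𝓝 (Real.sqrt π)) :=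
    tendsto_stirlingSeq_sqrt_pi.comp (tendsto_atTop_mono (fun n => by simpa using (by omega : n ≤ 2*n)) tendsto_id)
  have h6 : Tendsto (fun n : ℕ => stirlingSeq (6*n)) atTop (𝓝 (Real.sqrt π)) :=
    tendsto_stirlingSeq_sqrt_pi.comp (tendsto_atTop_mono (fun n => by simpa using (by omega : n ≤ 6*n)) tendsto_id)
  have h1 : Tendsto (fun n : ℕ => stirlingSeq n) atTop (𝓝 (Real.sqrt π)) :=
    tendsto_stirlingSeq_sqrt_pi
  have hne : (Real.sqrt π)^6 * Real.sqrt π ≠ 0 := by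
    have := Real.sqrt_pos.2 Real.pi_pos
    positivity
  exact ((h3.pow 2).mul (h2.pow 3)).div ((h1.pow 6).mul h6) hne

lemma lim_D : Tendsto (fun n : ℕ => 4 * Real.sqrt 3 * (n:ℝ) / (6*(n:ℝ)+1))
    atTop (𝓝 (4 * Real.sqrt 3 / 6)) := by
  have h : Tendsto (fun n : ℕ => 4 * Real.sqrt 3 / (6 + 1/(n:ℝ))) atTop
      (𝓝 (4 * Real.sqrt 3 / (6 + 0))) := by
    apply Tendsto.div tendsto_const_nhds
    · exact tendsto_const_nhds.add tendsto_one_div_atTop_nhds_zero_nat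
    · norm_num
  rw [show (6:ℝ) + 0 = 6 by norm_num] at h
  apply h.congr'
  filter_upwards [eventually_ge_atTop 1] with n hn
  have hn' : (0:ℝ) < (n:ℝ) := by exact_mod_cast hn
  have h6 : (0:ℝ) < 6*(n:ℝ)+1 := by linarith
  field_simp

lemma const_eq :
    (Real.sqrt π)^2 * (Real.sqrt π)^3 / ((Real.sqrt π)^6 * Real.sqrt π) * (4 * Real.sqrt 3 / 6)
      = 2 / (π * Real.sqrt 3) := by
  have hp : Real.sqrt π ^ 2 = π := Real.sq_sqrt Real.pi_pos.le
  have h3 : Real.sqrt 3 * Real.sqrt 3 = 3 := Real.mul_self_sqrt (by norm_num)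
  have hπ0 : (0:ℝ) < Real.sqrt π := Real.sqrt_pos.2 Real.pi_pos
  have h30 : (0:ℝ) < Real.sqrt 3 := Real.sqrt_pos.2 (by norm_num)
  have hpi := Real.pi_pos
  have e6 : Real.sqrt π^6 = π^3 := by rw [show (6:ℕ)=2*3 from rfl, pow_mul, hp]
  have e3 : Real.sqrt π^3 = π * Real.sqrt π := by rw [pow_succ, hp]
  rw [e6, e3, hp]
  field_simp
  linear_combination 4 * h3

lemma main_even : Tendsto (fun n : ℕ => ((2*n : ℕ) : ℝ)^2 * wigner3jSq (2*n) (2*n) (2*n))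
    atTop (𝓝 (2 / (π * Real.sqrt 3))) := by
  rw [← const_eq]
  apply (lim_S.mul lim_D).congr'
  filter_upwards [eventually_ge_atTop 1] with n hn
  exact (key_id hn).symm

end Stmt13Aux

/-- `ℓ² (ℓ ℓ ℓ; 0 0 0)² → 2/(π√3)` as `ℓ → ∞` along even `ℓ`. -/
theorem stmt_13 :
    Tendsto (fun ℓ : ℕ => (ℓ : ℝ) ^ 2 * wigner3jSq ℓ ℓ ℓ)
      (atTop ⊓ Filter.principal {ℓ : ℕ | Even ℓ})
      (nhds (2 / (Real.pi * Real.sqrt 3))) := by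
  rw [Filter.tendsto_def]
  intro s hs
  obtain ⟨N, hN⟩ := Filter.eventually_atTop.mp ((Filter.tendsto_def.mp Stmt13Aux.main_even) s hs)
  rw [Filter.mem_inf_principal]
  filter_upwards [Filter.eventually_ge_atTop (2*N)] with ℓ hℓ hev
  obtain ⟨k, hk⟩ := hev
  have hk2 : ℓ = 2*k := by omega
  subst hk2
  exact hN k (by omega)
end
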